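/- arXiv:1510.06973 — 2 statements merged into one kernel-verified Lean document; each statement's English description precedes it below -/
import Mathlib

section
/- If K is a compact nonautonomous random set that is absorbing for a nonautonomous random set M, then the omega-limit set Ω_M attracts M: for all τ ∈ 𝕋 and almost all ω ∈ Ω, lim_{t→∞} dist(Φ(t,τ−t,θ_{−t}ω)M(τ−t,θ_{−t}ω), Ω_M(τ,ω)) = 0, where dist(D₁,D₂) := sup_{x∈D₁} inf_{y∈D₂} d(x,y) is the Hausdorff semi-distance. -/
open MeasureTheory Set Filter Topology

/-- The `(τ,ω)`-fiber of a nonautonomous random set `M ⊆ 𝕋 × Ω × X`. -/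
def fiber {Ω X : Type*} (M : Set (ℝ × Ω × X)) (τ : ℝ) (ω : Ω) : Set X :=
  {x | (τ, ω, x) ∈ M}

/-- A nonautonomous random dynamical system `(θ, Φ)` over the time set `𝕋 = ℝ`,
on a base probability space `(Ω, 𝓕, ℙ)` and a metric phase space `X`. -/
structure NRDS (Ω X : Type*) [MeasurableSpace Ω] [MetricSpace X] [MeasurableSpace X]
    (ℙ : MeasureTheory.Measure Ω) where
  /-- the metric dynamical system modelling the noise -/
  θ : ℝ → Ω → Ω
  /-- the cocycle: `Φ t τ ω x` is the state at time `τ + t` starting from `x` at time `τ` -/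
  Φ : ℝ → ℝ → Ω → X → X
  measurable_θ : Measurable fun p : ℝ × Ω => θ p.1 p.2
  θ_zero : ∀ ω, θ 0 ω = ω
  θ_add : ∀ t s : ℝ, ∀ ω, θ (t + s) ω = θ t (θ s ω)
  measurePreserving_θ : ∀ t : ℝ, MeasurePreserving (θ t) ℙ ℙ
  measurable_Φ : Measurable fun p : ℝ × ℝ × Ω × X => Φ p.1 p.2.1 p.2.2.1 p.2.2.2
  Φ_zero : ∀ τ : ℝ, ∀ x : X, ∀ᵐ ω ∂ℙ, Φ 0 τ ω x = x
  Φ_cocycle : ∀ t s τ : ℝ, ∀ x : X, ∀ᵐ ω ∂ℙ,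
    Φ (t + s) τ ω x = Φ t (τ + s) (θ s ω) (Φ s τ ω x)
  Φ_cont : ∀ᵐ ω ∂ℙ, Continuous fun p : ℝ × ℝ × X => Φ p.1 p.2.1 ω p.2.2

variable {Ω : Type*} [MeasurableSpace Ω]
variable {X : Type*} [MetricSpace X] [TopologicalSpace.SeparableSpace X] [CompleteSpace X]
  [MeasurableSpace X] [BorelSpace X]
variable {ℙ : MeasureTheory.Measure Ω}

/-- The `(τ,ω)`-fiber of the omega-limit set of a nonautonomous random set `M`:
`Ω_M(τ,ω) = ⋂_{T ≥ 0} closure (⋃_{t ≥ T} Φ(t, τ-t, θ_{-t}ω) M(τ-t, θ_{-t}ω))`. -/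
def omegaFib (S : NRDS Ω X ℙ) (M : Set (ℝ × Ω × X)) (τ : ℝ) (ω : Ω) : Set X :=
  ⋂ T ∈ Ici (0 : ℝ), closure (⋃ t ∈ Ici T,
    S.Φ t (τ - t) (S.θ (-t) ω) '' fiber M (τ - t) (S.θ (-t) ω))

/-- The Hausdorff semi-distance `dist(D₁,D₂) = sup_{x ∈ D₁} inf_{y ∈ D₂} d(x,y)`
(with values in `[0,∞]`). -/
noncomputable def semiDist {Y : Type*} [MetricSpace Y] (D₁ D₂ : Set Y) : ENNReal :=
  ⨆ x ∈ D₁, EMetric.infEdist x D₂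

/-- The nonautonomous random set `K` is absorbing for the nonautonomous random set `M`. -/
def Absorbing (S : NRDS Ω X ℙ) (K M : Set (ℝ × Ω × X)) : Prop :=
  ∀ τ : ℝ, ∀ᵐ ω ∂ℙ, ∃ T > (0 : ℝ), ∀ t ≥ T,
    S.Φ t (τ - t) (S.θ (-t) ω) '' fiber M (τ - t) (S.θ (-t) ω) ⊆ fiber K τ ω

/-- if `K` is a compact nonautonomous random set absorbing `M`, then the
omega-limit set `Ω_M` attracts `M`: the Hausdorff semi-distance of
`Φ(t, τ-t, θ_{-t}ω) M(τ-t, θ_{-t}ω)` from `Ω_M(τ,ω)` tends to `0` as `t → ∞`. -/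
theorem omegaLimit_attracts (ℙ : Measure Ω) [IsProbabilityMeasure ℙ]
    (S : NRDS Ω X ℙ) (M K : Set (ℝ × Ω × X))
    (hM : MeasurableSet M) (hK : MeasurableSet K)
    (hKcomp : ∀ τ : ℝ, ∀ ω : Ω, IsCompact (fiber K τ ω))
    (habs : Absorbing S K M) :
    ∀ τ : ℝ, ∀ᵐ ω ∂ℙ,
      Tendsto (fun t : ℝ =>
          semiDist (S.Φ t (τ - t) (S.θ (-t) ω) '' fiber M (τ - t) (S.θ (-t) ω))
            (omegaFib S M τ ω))
        atTop (nhds 0) := by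
  intro τ
  filter_upwards [habs τ] with ω hω
  obtain ⟨T, hT0, hT⟩ := hω
  set A : ℝ → Set X := fun t =>
    S.Φ t (τ - t) (S.θ (-t) ω) '' fiber M (τ - t) (S.θ (-t) ω) with hA
  set L : Set X := omegaFib S M τ ω with hL
  rw [ENNReal.tendsto_nhds_zero]
  intro ε hε
  by_contra hcon
  rw [Filter.not_eventually] at hcon
  have hseq : ∀ n : ℕ, ∃ t : ℝ, max T n ≤ t ∧ ε < semiDist (A t) L := by
    intro n
    rcases frequently_atTop.mp hcon (max T n) with ⟨t, ht, h⟩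
    exact ⟨t, ht, lt_of_not_ge h⟩
  choose t ht hlt using hseq
  have hx : ∀ n, ∃ x ∈ A (t n), ε < EMetric.infEdist x L := by
    intro n
    have := hlt n
    simpa [semiDist, lt_iSup_iff] using this
  choose x hxA hxd using hx
  have hxK : ∀ n, x n ∈ fiber K τ ω := fun n =>
    hT (t n) (le_trans (le_max_left _ _) (ht n)) (hxA n)
  obtain ⟨y, hy, φ, hφ, hconv⟩ := (hKcomp τ ω).tendsto_subseq hxK
  have hyL : y ∈ L := by
    rw [hL, omegaFib]
    simp only [mem_iInter]
    intro T' hT'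
    refine mem_closure_of_tendsto hconv ?_
    filter_upwards [eventually_ge_atTop ⌈T'⌉₊] with n hn
    have h1 : (T' : ℝ) ≤ t (φ n) := by
      have h2 : (⌈T'⌉₊ : ℝ) ≤ (φ n : ℝ) := by
        exact_mod_cast le_trans hn (hφ.le_apply)
      calc T' ≤ (⌈T'⌉₊ : ℝ) := Nat.le_ceil T'
        _ ≤ (φ n : ℝ) := h2
        _ ≤ t (φ n) := le_trans (le_max_right _ _) (ht (φ n))
    exact mem_biUnion (show t (φ n) ∈ Ici T' from h1) (hxA (φ n))
  have h0 : EMetric.infEdist y L = 0 := EMetric.infEdist_zero_of_mem hyL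
  have htend : Tendsto (fun n => EMetric.infEdist (x (φ n)) L) atTop
      (𝓝 (EMetric.infEdist y L)) :=
    (EMetric.continuous_infEdist.tendsto y).comp hconv
  have : ε ≤ EMetric.infEdist y L :=
    ge_of_tendsto htend (Eventually.of_forall fun n => (hxd (φ n)).le)
  rw [h0] at this
  exact absurd this (not_le.mpr hε)
end

section
/- The drift of the overdamped periodically forced Duffing equation satisfies the integrability condition: for all α, β > 0, A, ν ∈ ℝ, every c > 0, every t ∈ ℝ, and every continuous function u : ℝ → ℝ with sub-exponential growth (i.e. for every ε > 0 there exists C_ε > 0 with |u(r)| ≤ C_ε e^{ε|r|} for all r ∈ ℝ), the function r ↦ e^{cr}·(α·u(r) − β·u(r)³ + A·cos(νr))² is integrable on the half-line (−∞, t], i.e. ∫_{−∞}^{t} e^{cr}|f(r,u(r))|² dr < ∞ where f(t,x) := αx − βx³ + A·cos(νt). -/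
open MeasureTheory

/-- `exp (b r)` is integrable on `Iic t` when `b > 0`. -/
lemma exp_integrableOn_Iic (b t : ℝ) (hb : 0 < b) :
    IntegrableOn (fun r => Real.exp (b * r)) (Set.Iic t) := by
  have h := exp_neg_integrableOn_Ioi (-t) hb
  have h2 := ((integrable_indicator_iff measurableSet_Ioi).2 h).comp_neg
  rw [integrableOn_Iic_iff_integrableOn_Iio]
  refine (integrable_indicator_iff measurableSet_Iio).1 ?_
  convert h2 using 1
  · rfl
  funext x
  by_cases hx : x < t <;>
    simp [Set.indicator_apply, hx, Set.mem_Iio, Set.mem_Ioi, mul_comm]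

/-- the drift `f(t,x) = αx − βx³ + A cos(νt)` of the overdamped
periodically forced Duffing equation satisfies the integrability condition: for every
`c > 0`, every `t ∈ ℝ` and every continuous `u : ℝ → ℝ` of sub-exponential growth,
`∫_{-∞}^{t} e^{cr} |f(r,u(r))|² dr < ∞`. -/
theorem duffing_drift_integrable :
    ∀ α β : ℝ, 0 < α → 0 < β → ∀ A ν : ℝ, ∀ c : ℝ, 0 < c → ∀ t : ℝ,
      ∀ u : ℝ → ℝ, Continuous u →
        (∀ ε : ℝ, 0 < ε → ∃ C : ℝ, 0 < C ∧ ∀ r : ℝ, |u r| ≤ C * Real.exp (ε * |r|)) →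
        MeasureTheory.IntegrableOn
          (fun r : ℝ => Real.exp (c * r) *
            |α * u r - β * u r ^ 3 + A * Real.cos (ν * r)| ^ 2)
          (Set.Iic t) := by
  intro α β hα hβ A ν c hc t u hu hgrow
  obtain ⟨C, hC, hCu⟩ := hgrow (c / 12) (by linarith)
  set K : ℝ := α * C + β * C ^ 3 + |A| with hK
  have hK0 : 0 ≤ K := by positivity
  set M : ℝ := K ^ 2 * Real.exp (c / 2 * (|t| + t)) with hM
  refine Integrable.mono' ((exp_integrableOn_Iic (c / 2) t (by linarith)).const_mul M)
    ?_ ?_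
  · have hcont : Continuous fun r : ℝ => Real.exp (c * r) *
        |α * u r - β * u r ^ 3 + A * Real.cos (ν * r)| ^ 2 := by
      apply Continuous.mul
      · exact Real.continuous_exp.comp (continuous_const.mul continuous_id)
      · exact ((_root_.continuous_abs.comp (((continuous_const.mul hu).sub
          (continuous_const.mul (hu.pow 3))).add
          (continuous_const.mul (Real.continuous_cos.comp
            (continuous_const.mul continuous_id))))).pow 2)
    exact hcont.aestronglyMeasurable.restrict
  · rw [ae_restrict_iff' measurableSet_Iic]
    refine Filter.Eventually.of_forall fun r hr => ?_
    have hr' : r ≤ t := hr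
    -- bound on |f|
    have hu3 : |u r| ^ 3 ≤ C ^ 3 * Real.exp (3 * (c / 12 * |r|)) := by
      calc |u r| ^ 3 ≤ (C * Real.exp (c / 12 * |r|)) ^ 3 :=
            pow_le_pow_left₀ (abs_nonneg _) (hCu r) 3
        _ = C ^ 3 * Real.exp (3 * (c / 12 * |r|)) := by
            rw [mul_pow, ← Real.exp_nat_mul]; norm_num
    have hE1 : Real.exp (c / 12 * |r|) ≤ Real.exp (3 * (c / 12 * |r|)) := by
      apply Real.exp_le_exp.2
      nlinarith [abs_nonneg r, hc]
    have hE0 : (1 : ℝ) ≤ Real.exp (3 * (c / 12 * |r|)) := by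
      apply Real.one_le_exp
      positivity
    have hf : |α * u r - β * u r ^ 3 + A * Real.cos (ν * r)| ≤
        K * Real.exp (3 * (c / 12 * |r|)) := by
      have h1 : |α * u r - β * u r ^ 3 + A * Real.cos (ν * r)| ≤
          α * |u r| + β * |u r| ^ 3 + |A| := by
        have habs := abs_add_le (α * u r - β * u r ^ 3) (A * Real.cos (ν * r))
        have habs2 := abs_sub (α * u r) (β * u r ^ 3)
        have hcos : |A * Real.cos (ν * r)| ≤ |A| := by
          rw [abs_mul]
          nlinarith [Real.abs_cos_le_one (ν * r), abs_nonneg A]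
        have e1 : |α * u r| = α * |u r| := by
          rw [abs_mul, abs_of_pos hα]
        have e2 : |β * u r ^ 3| = β * |u r| ^ 3 := by
          rw [abs_mul, abs_of_pos hβ, abs_pow]
        calc |α * u r - β * u r ^ 3 + A * Real.cos (ν * r)|
            ≤ |α * u r - β * u r ^ 3| + |A * Real.cos (ν * r)| := habs
          _ ≤ (|α * u r| + |β * u r ^ 3|) + |A| := add_le_add habs2 hcos
          _ = α * |u r| + β * |u r| ^ 3 + |A| := by rw [e1, e2]
      have h2 : α * |u r| ≤ α * C * Real.exp (3 * (c / 12 * |r|)) := by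
        calc α * |u r| ≤ α * (C * Real.exp (c / 12 * |r|)) :=
              mul_le_mul_of_nonneg_left (hCu r) hα.le
          _ ≤ α * C * Real.exp (3 * (c / 12 * |r|)) := by
              rw [mul_assoc]
              exact mul_le_mul_of_nonneg_left
                (mul_le_mul_of_nonneg_left hE1 hC.le) hα.le
      have h3 : β * |u r| ^ 3 ≤ β * C ^ 3 * Real.exp (3 * (c / 12 * |r|)) := by
        rw [mul_assoc]
        exact mul_le_mul_of_nonneg_left hu3 hβ.le
      have h4 : |A| ≤ |A| * Real.exp (3 * (c / 12 * |r|)) :=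
        le_mul_of_one_le_right (abs_nonneg A) hE0
      calc |α * u r - β * u r ^ 3 + A * Real.cos (ν * r)|
          ≤ α * |u r| + β * |u r| ^ 3 + |A| := h1
        _ ≤ α * C * Real.exp (3 * (c / 12 * |r|)) +
            β * C ^ 3 * Real.exp (3 * (c / 12 * |r|)) +
            |A| * Real.exp (3 * (c / 12 * |r|)) := by
            exact add_le_add (add_le_add h2 h3) h4
        _ = K * Real.exp (3 * (c / 12 * |r|)) := by ring
    have hf2 : |α * u r - β * u r ^ 3 + A * Real.cos (ν * r)| ^ 2 ≤
        K ^ 2 * Real.exp (c / 2 * |r|) := by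
      calc |α * u r - β * u r ^ 3 + A * Real.cos (ν * r)| ^ 2
          ≤ (K * Real.exp (3 * (c / 12 * |r|))) ^ 2 :=
            pow_le_pow_left₀ (abs_nonneg _) hf 2
        _ = K ^ 2 * Real.exp (c / 2 * |r|) := by
            rw [mul_pow, ← Real.exp_nat_mul]
            ring_nf
    have habsr : |r| ≤ |t| + t - r := by
      rcases abs_cases r with ⟨h1, h2⟩ | ⟨h1, h2⟩ <;>
        rcases abs_cases t with ⟨h3, h4⟩ | ⟨h3, h4⟩ <;> linarith
    have hnn : 0 ≤ Real.exp (c * r) *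
        |α * u r - β * u r ^ 3 + A * Real.cos (ν * r)| ^ 2 := by positivity
    rw [Real.norm_eq_abs, abs_of_nonneg hnn]
    calc Real.exp (c * r) * |α * u r - β * u r ^ 3 + A * Real.cos (ν * r)| ^ 2
        ≤ Real.exp (c * r) * (K ^ 2 * Real.exp (c / 2 * |r|)) :=
          mul_le_mul_of_nonneg_left hf2 (Real.exp_pos _).le
      _ = K ^ 2 * Real.exp (c * r + c / 2 * |r|) := by
          rw [Real.exp_add]; ring
      _ ≤ K ^ 2 * Real.exp (c / 2 * (|t| + t) + c / 2 * r) := by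
          refine mul_le_mul_of_nonneg_left (Real.exp_le_exp.2 ?_) (by positivity)
          nlinarith [habsr, hc]
      _ = M * Real.exp (c / 2 * r) := by
          rw [hM, Real.exp_add]; ring
end
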